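/- arXiv:2508.20628 — 2 statements merged into one kernel-verified Lean document; each statement's English description precedes it below -/
import Mathlib

section
/- Let G be a group. The linear subspace L(G) = span{g − g⁻¹ | g ∈ G} of the complex group algebra ℂG is closed under the commutator bracket [a,b] = ab − ba; hence L(G) is a Lie subalgebra of ℂG (the Plesken Lie algebra of G). -/
/-- The Plesken Lie algebra `L(G) = span {g - g⁻¹ | g ∈ G}` inside the complex group
algebra `ℂG` is closed under the commutator bracket, i.e. it is a Lie subalgebra. -/
theorem stmt3 {G : Type*} [Group G] :
    ∀ x ∈ Submodule.span ℂ
        {z : MonoidAlgebra ℂ G | ∃ g : G, z = MonoidAlgebra.of ℂ G g - MonoidAlgebra.of ℂ G g⁻¹},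
      ∀ y ∈ Submodule.span ℂ
          {z : MonoidAlgebra ℂ G | ∃ g : G, z = MonoidAlgebra.of ℂ G g - MonoidAlgebra.of ℂ G g⁻¹},
        ⁅x, y⁆ ∈ Submodule.span ℂ
          {z : MonoidAlgebra ℂ G | ∃ g : G, z = MonoidAlgebra.of ℂ G g - MonoidAlgebra.of ℂ G g⁻¹} := by
  set S : Set (MonoidAlgebra ℂ G) :=
    {z : MonoidAlgebra ℂ G | ∃ g : G, z = MonoidAlgebra.of ℂ G g - MonoidAlgebra.of ℂ G g⁻¹}
  have hmem : ∀ k : G,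
      MonoidAlgebra.of ℂ G k - MonoidAlgebra.of ℂ G k⁻¹ ∈ Submodule.span ℂ S :=
    fun k => Submodule.subset_span ⟨k, rfl⟩
  have key : ∀ g h : G,
      ⁅MonoidAlgebra.of ℂ G g - MonoidAlgebra.of ℂ G g⁻¹,
        MonoidAlgebra.of ℂ G h - MonoidAlgebra.of ℂ G h⁻¹⁆ ∈ Submodule.span ℂ S := by
    intro g h
    have heq : ⁅MonoidAlgebra.of ℂ G g - MonoidAlgebra.of ℂ G g⁻¹,
        MonoidAlgebra.of ℂ G h - MonoidAlgebra.of ℂ G h⁻¹⁆ =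
        (MonoidAlgebra.of ℂ G (g * h) - MonoidAlgebra.of ℂ G (g * h)⁻¹)
        - (MonoidAlgebra.of ℂ G (g * h⁻¹) - MonoidAlgebra.of ℂ G (g * h⁻¹)⁻¹)
        - (MonoidAlgebra.of ℂ G (g⁻¹ * h) - MonoidAlgebra.of ℂ G (g⁻¹ * h)⁻¹)
        + (MonoidAlgebra.of ℂ G (g⁻¹ * h⁻¹) - MonoidAlgebra.of ℂ G (g⁻¹ * h⁻¹)⁻¹) := by
      simp only [Ring.lie_def, sub_mul, mul_sub, ← map_mul, mul_inv_rev, inv_inv]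
      abel
    rw [heq]
    exact add_mem (sub_mem (sub_mem (hmem _) (hmem _)) (hmem _)) (hmem _)
  intro x hx y hy
  induction hx using Submodule.span_induction with
  | mem x hxS =>
    obtain ⟨g, rfl⟩ := hxS
    induction hy using Submodule.span_induction with
    | mem y hyS => obtain ⟨h, rfl⟩ := hyS; exact key g h
    | zero => simp only [Ring.lie_def, mul_zero, zero_mul, sub_zero]; exact Submodule.zero_mem _
    | add a b _ _ ha hb =>
      simp only [Ring.lie_def] at ha hb ⊢
      rw [mul_add, add_mul, add_sub_add_comm]; exact add_mem ha hb
    | smul c a _ ha =>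
      simp only [Ring.lie_def] at ha ⊢
      rw [mul_smul_comm, smul_mul_assoc, ← smul_sub]; exact Submodule.smul_mem _ _ ha
  | zero => simp only [Ring.lie_def, mul_zero, zero_mul, sub_zero]; exact Submodule.zero_mem _
  | add a b _ _ ha hb =>
    simp only [Ring.lie_def] at ha hb ⊢
    rw [mul_add, add_mul, add_sub_add_comm]; exact add_mem ha hb
  | smul c a _ ha =>
    simp only [Ring.lie_def] at ha ⊢
    rw [mul_smul_comm, smul_mul_assoc, ← smul_sub]; exact Submodule.smul_mem _ _ ha
end

section
/- Let L be a 4-dimensional complex Lie algebra with basis b₁, b₂, b₃, b₄ whose Lie bracket satisfies [b₁, b₂] = −b₁ − b₂, [b₁, b₃] = b₃ − b₄, [b₂, b₃] = −b₃ − b₄, and [bᵢ, b₄] = 0 for i = 1, 2, 3. Then the derived series of L is L' = span(b₁ + b₂, b₃, b₄), L'' = span(b₄), L''' = 0; in particular L is solvable of derived length 3. -/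
private lemma aux_bracket_mem {L : Type*} [LieRing L] [LieAlgebra ℂ L]
    {s t : Set L} {p : Submodule ℂ L}
    (h : ∀ a ∈ s, ∀ c ∈ t, ⁅a, c⁆ ∈ p)
    {x y : L} (hx : x ∈ Submodule.span ℂ s) (hy : y ∈ Submodule.span ℂ t) :
    ⁅x, y⁆ ∈ p := by
  induction hx using Submodule.span_induction with
  | mem a ha =>
    induction hy using Submodule.span_induction with
    | mem c hc => exact h a ha c hc
    | zero => simp
    | add u v _ _ hu hv => rw [lie_add]; exact p.add_mem hu hv
    | smul r u _ hu => rw [lie_smul]; exact p.smul_mem r hu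
  | zero => simp
  | add u v _ _ hu hv => rw [add_lie]; exact p.add_mem hu hv
  | smul r u _ hu => rw [smul_lie]; exact p.smul_mem r hu

/-- A 4-dimensional complex Lie algebra with basis `b₁, b₂, b₃, b₄` and brackets
`[b₁,b₂] = -b₁-b₂`, `[b₁,b₃] = b₃-b₄`, `[b₂,b₃] = -b₃-b₄`, `[bᵢ,b₄] = 0` has derived
series `L' = span(b₁+b₂, b₃, b₄)`, `L'' = span(b₄)`, `L''' = 0`; in particular it is
solvable of derived length 3. -/
theorem stmt14 {L : Type*} [LieRing L] [LieAlgebra ℂ L]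
    (b : Module.Basis (Fin 4) ℂ L)
    (h12 : ⁅b 0, b 1⁆ = -b 0 - b 1)
    (h13 : ⁅b 0, b 2⁆ = b 2 - b 3)
    (h23 : ⁅b 1, b 2⁆ = -b 2 - b 3)
    (h14 : ⁅b 0, b 3⁆ = 0)
    (h24 : ⁅b 1, b 3⁆ = 0)
    (h34 : ⁅b 2, b 3⁆ = 0) :
    (LieAlgebra.derivedSeries ℂ L 1).toSubmodule =
        Submodule.span ℂ {b 0 + b 1, b 2, b 3} ∧
    (LieAlgebra.derivedSeries ℂ L 2).toSubmodule = Submodule.span ℂ {b 3} ∧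
    LieAlgebra.derivedSeries ℂ L 3 = ⊥ ∧
    LieAlgebra.IsSolvable L ∧
    LieAlgebra.derivedSeries ℂ L 2 ≠ ⊥ := by
  -- skew brackets
  have h21 : ⁅b 1, b 0⁆ = b 0 + b 1 := by rw [← lie_skew, h12]; abel
  have h31 : ⁅b 2, b 0⁆ = -(b 2 - b 3) := by rw [← lie_skew, h13]
  have h32 : ⁅b 2, b 1⁆ = -(-b 2 - b 3) := by rw [← lie_skew, h23]
  have h41 : ⁅b 3, b 0⁆ = 0 := by rw [← lie_skew, h14, neg_zero]
  have h42 : ⁅b 3, b 1⁆ = 0 := by rw [← lie_skew, h24, neg_zero]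
  have h43 : ⁅b 3, b 2⁆ = 0 := by rw [← lie_skew, h34, neg_zero]
  set S : Set L := {b 0 + b 1, b 2, b 3} with hS
  -- membership of generators in span S
  have m1 : b 0 + b 1 ∈ Submodule.span ℂ S := Submodule.subset_span (by simp [hS])
  have m2 : b 2 ∈ Submodule.span ℂ S := Submodule.subset_span (by simp [hS])
  have m3 : b 3 ∈ Submodule.span ℂ S := Submodule.subset_span (by simp [hS])
  have hD1eq : LieAlgebra.derivedSeries ℂ L 1 = ⁅(⊤ : LieIdeal ℂ L), (⊤ : LieIdeal ℂ L)⁆ := by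
    rw [LieAlgebra.derivedSeries_def, LieAlgebra.derivedSeriesOfIdeal_succ,
      LieAlgebra.derivedSeriesOfIdeal_zero]
  have hD2eq : LieAlgebra.derivedSeries ℂ L 2 =
      ⁅LieAlgebra.derivedSeries ℂ L 1, LieAlgebra.derivedSeries ℂ L 1⁆ := by
    rw [LieAlgebra.derivedSeries_def, LieAlgebra.derivedSeries_def,
      LieAlgebra.derivedSeriesOfIdeal_succ]
  have hD3eq : LieAlgebra.derivedSeries ℂ L 3 =
      ⁅LieAlgebra.derivedSeries ℂ L 2, LieAlgebra.derivedSeries ℂ L 2⁆ := by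
    rw [LieAlgebra.derivedSeries_def, LieAlgebra.derivedSeries_def,
      LieAlgebra.derivedSeriesOfIdeal_succ]
  -- basis pair brackets lie in span S
  have p12 : ⁅b 0, b 1⁆ ∈ Submodule.span ℂ S := by
    rw [h12, show (-b 0 - b 1 : L) = -(b 0 + b 1) by abel]; exact Submodule.neg_mem _ m1
  have p13 : ⁅b 0, b 2⁆ ∈ Submodule.span ℂ S := by
    rw [h13]; exact Submodule.sub_mem _ m2 m3
  have p23 : ⁅b 1, b 2⁆ ∈ Submodule.span ℂ S := by
    rw [h23, show (-b 2 - b 3 : L) = -(b 2 + b 3) by abel]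
    exact Submodule.neg_mem _ (Submodule.add_mem _ m2 m3)
  have p21 : ⁅b 1, b 0⁆ ∈ Submodule.span ℂ S := by rw [h21]; exact m1
  have p31 : ⁅b 2, b 0⁆ ∈ Submodule.span ℂ S := by
    rw [h31]; exact Submodule.neg_mem _ (Submodule.sub_mem _ m2 m3)
  have p32 : ⁅b 2, b 1⁆ ∈ Submodule.span ℂ S := by
    rw [h32, show (-(-b 2 - b 3) : L) = b 2 + b 3 by abel]; exact Submodule.add_mem _ m2 m3
  have pz : ∀ x : L, ⁅x, x⁆ ∈ Submodule.span ℂ S := fun x => by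
    rw [lie_self]; exact Submodule.zero_mem _
  have p14 : ⁅b 0, b 3⁆ ∈ Submodule.span ℂ S := by rw [h14]; exact Submodule.zero_mem _
  have p24 : ⁅b 1, b 3⁆ ∈ Submodule.span ℂ S := by rw [h24]; exact Submodule.zero_mem _
  have p34 : ⁅b 2, b 3⁆ ∈ Submodule.span ℂ S := by rw [h34]; exact Submodule.zero_mem _
  have p41 : ⁅b 3, b 0⁆ ∈ Submodule.span ℂ S := by rw [h41]; exact Submodule.zero_mem _
  have p42 : ⁅b 3, b 1⁆ ∈ Submodule.span ℂ S := by rw [h42]; exact Submodule.zero_mem _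
  have p43 : ⁅b 3, b 2⁆ ∈ Submodule.span ℂ S := by rw [h43]; exact Submodule.zero_mem _
  have hbij : ∀ i j : Fin 4, ⁅b i, b j⁆ ∈ Submodule.span ℂ S := by
    intro i j
    fin_cases i <;> fin_cases j
    · exact pz _
    · exact p12
    · exact p13
    · exact p14
    · exact p21
    · exact pz _
    · exact p23
    · exact p24
    · exact p31
    · exact p32
    · exact pz _
    · exact p34
    · exact p41
    · exact p42
    · exact p43
    · exact pz _
  -- Part 1
  have part1 : (LieAlgebra.derivedSeries ℂ L 1).toSubmodule = Submodule.span ℂ S := by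
    rw [hD1eq, LieSubmodule.lieIdeal_oper_eq_linear_span']
    apply le_antisymm
    · rw [Submodule.span_le]
      rintro m ⟨x, -, y, -, rfl⟩
      refine aux_bracket_mem (s := Set.range b) (t := Set.range b) ?_ ?_ ?_
      · rintro a ⟨i, rfl⟩ c ⟨j, rfl⟩; exact hbij i j
      · rw [b.span_eq]; trivial
      · rw [b.span_eq]; trivial
    · rw [Submodule.span_le]
      rintro z hz
      have hb1 : b 0 + b 1 = ⁅b 1, b 0⁆ := h21.symm
      have hb3 : b 3 = (-(1/2) : ℂ) • (⁅b 0, b 2⁆ + ⁅b 1, b 2⁆) := by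
        rw [h13, h23]; module
      have hb2 : b 2 = ⁅b 0, b 2⁆ + (-(1/2) : ℂ) • (⁅b 0, b 2⁆ + ⁅b 1, b 2⁆) := by
        rw [h13, h23]; module
      have key : ∀ i j : Fin 4, ⁅b i, b j⁆ ∈
          Submodule.span ℂ { m | ∃ x ∈ (⊤ : LieIdeal ℂ L), ∃ n ∈ (⊤ : LieIdeal ℂ L), ⁅x, n⁆ = m } :=
        fun i j => Submodule.subset_span ⟨b i, trivial, b j, trivial, rfl⟩
      rcases hz with rfl | rfl | rfl
      · rw [hb1]; exact key 1 0
      · rw [hb2]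
        exact Submodule.add_mem _ (key 0 2)
          (Submodule.smul_mem _ _ (Submodule.add_mem _ (key 0 2) (key 1 2)))
      · rw [hb3]
        exact Submodule.smul_mem _ _ (Submodule.add_mem _ (key 0 2) (key 1 2))
  -- Part 2
  have memD1 : ∀ x : L, x ∈ LieAlgebra.derivedSeries ℂ L 1 ↔ x ∈ Submodule.span ℂ S := by
    intro x
    rw [← LieSubmodule.mem_toSubmodule, part1]
  have part2 : (LieAlgebra.derivedSeries ℂ L 2).toSubmodule = Submodule.span ℂ {b 3} := by
    rw [hD2eq, LieSubmodule.lieIdeal_oper_eq_linear_span']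
    apply le_antisymm
    · rw [Submodule.span_le]
      rintro m ⟨x, hx, y, hy, rfl⟩
      rw [memD1] at hx hy
      refine aux_bracket_mem (s := S) (t := S) ?_ hx hy
      rintro a (rfl | rfl | rfl) c (rfl | rfl | rfl) <;>
        simp only [add_lie, lie_add, lie_self, h12, h13, h14, h21, h23, h24, h34, h31, h32,
          h41, h42, h43, add_zero, zero_add, lie_zero, zero_lie]
      · exact Submodule.zero_mem _
      · have : (b 2 - b 3 : L) + (-b 2 - b 3) = (-2 : ℂ) • b 3 := by module
        rw [this]; exact Submodule.smul_mem _ _ (Submodule.subset_span rfl)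
      · exact Submodule.zero_mem _
      · have : (-(b 2 - b 3 : L)) + -(-b 2 - b 3) = (2 : ℂ) • b 3 := by module
        rw [this]; exact Submodule.smul_mem _ _ (Submodule.subset_span rfl)
      · exact Submodule.zero_mem _
      · exact Submodule.zero_mem _
      · exact Submodule.zero_mem _
      · exact Submodule.zero_mem _
      · exact Submodule.zero_mem _
    · rw [Submodule.span_le]
      rintro z rfl
      have h1 : (b 0 + b 1 : L) ∈ LieAlgebra.derivedSeries ℂ L 1 := (memD1 _).2 m1
      have h2 : (b 2 : L) ∈ LieAlgebra.derivedSeries ℂ L 1 := (memD1 _).2 m2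
      have hb : b 3 = (-(1/2) : ℂ) • ⁅b 0 + b 1, b 2⁆ := by
        rw [add_lie, h13, h23]; module
      rw [hb]
      exact Submodule.smul_mem _ _ (Submodule.subset_span ⟨_, h1, _, h2, rfl⟩)
  -- Part 3
  have memD2 : ∀ x : L, x ∈ LieAlgebra.derivedSeries ℂ L 2 ↔ x ∈ Submodule.span ℂ ({b 3} : Set L) := by
    intro x
    rw [← LieSubmodule.mem_toSubmodule, part2]
  have part3 : LieAlgebra.derivedSeries ℂ L 3 = ⊥ := by
    rw [← LieSubmodule.toSubmodule_inj, hD3eq,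
      LieSubmodule.lieIdeal_oper_eq_linear_span', LieSubmodule.bot_toSubmodule]
    rw [← le_bot_iff, Submodule.span_le]
    rintro m ⟨x, hx, y, hy, rfl⟩
    rw [memD2] at hx hy
    have : ⁅x, y⁆ ∈ (⊥ : Submodule ℂ L) := by
      refine aux_bracket_mem (s := {b 3}) (t := {b 3}) ?_ hx hy
      rintro a rfl c rfl
      simp [lie_self]
    exact this
  refine ⟨part1, part2, part3, LieAlgebra.IsSolvable.mk part3, ?_⟩
  intro hbot
  have : (b 3 : L) ∈ LieAlgebra.derivedSeries ℂ L 2 := (memD2 _).2 (Submodule.subset_span rfl)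
  rw [hbot] at this
  exact b.ne_zero 3 ((LieSubmodule.mem_bot _).1 this)
end
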